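/- arXiv:1902.09443 — 5 statements merged into one kernel-verified Lean document; each statement's English description precedes it below -/
import Mathlib

section
/- Fix an integer m ≥ 1 and let q = log((2m+1)/(2m))/log((m+1)/m). The function g : [m+1, ∞) → R defined by g(j) = j·(m/(j−m))^q attains its minimum over integers j ≥ m+1 at j = 2m or j = 2m+1, and this minimum value equals 2m. -/
open Real

lemma convex_log_add_exp (M : ℝ) (hM : 0 < M) :
    ConvexOn ℝ Set.univ (fun u => Real.log (M + Real.exp u)) := by
  refine ⟨convex_univ, ?_⟩
  intro x _ y _ a b ha hb hab
  simp only [smul_eq_mul]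
  set P := M + Real.exp x with hPdef
  set Q := M + Real.exp y with hQdef
  have hP : 0 < P := by positivity
  have hQ : 0 < Q := by positivity
  set R := P ^ a * Q ^ b with hRdef
  have hR : 0 < R := by positivity
  -- key: M + exp (a*x+b*y) ≤ R
  have hMsplit : (M / P) ^ a * (M / Q) ^ b * R = M := by
    rw [hRdef]
    rw [show (M/P)^a * (M/Q)^b * (P^a*Q^b) = ((M/P)^a * P^a) * ((M/Q)^b * Q^b) by ring,
      ← Real.mul_rpow (by positivity) hP.le, ← Real.mul_rpow (by positivity) hQ.le,
      div_mul_cancel₀ _ hP.ne', div_mul_cancel₀ _ hQ.ne',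
      ← Real.rpow_add hM, hab, Real.rpow_one]
  have hEsplit : (Real.exp x / P) ^ a * (Real.exp y / Q) ^ b * R = Real.exp (a*x + b*y) := by
    rw [hRdef]
    rw [show (Real.exp x/P)^a * (Real.exp y/Q)^b * (P^a*Q^b)
        = ((Real.exp x/P)^a * P^a) * ((Real.exp y/Q)^b * Q^b) by ring,
      ← Real.mul_rpow (by positivity) hP.le, ← Real.mul_rpow (by positivity) hQ.le,
      div_mul_cancel₀ _ hP.ne', div_mul_cancel₀ _ hQ.ne']
    rw [Real.rpow_def_of_pos (Real.exp_pos x), Real.rpow_def_of_pos (Real.exp_pos y),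
      Real.log_exp, Real.log_exp, ← Real.exp_add]
    ring_nf
  have h1 : (M / P) ^ a * (M / Q) ^ b ≤ a * (M/P) + b * (M/Q) :=
    Real.geom_mean_le_arith_mean2_weighted ha hb (by positivity) (by positivity) hab
  have h2 : (Real.exp x / P) ^ a * (Real.exp y / Q) ^ b
      ≤ a * (Real.exp x/P) + b * (Real.exp y/Q) :=
    Real.geom_mean_le_arith_mean2_weighted ha hb (by positivity) (by positivity) hab
  have hsum : (a * (M/P) + b * (M/Q)) + (a * (Real.exp x/P) + b * (Real.exp y/Q)) = 1 := by
    have : a * (M/P) + a * (Real.exp x/P) = a := by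
      rw [← mul_add, ← add_div, ← hPdef, div_self hP.ne', mul_one]
    have h' : b * (M/Q) + b * (Real.exp y/Q) = b := by
      rw [← mul_add, ← add_div, ← hQdef, div_self hQ.ne', mul_one]
    linarith
  have hkey : M + Real.exp (a*x + b*y) ≤ R := by
    calc M + Real.exp (a*x+b*y)
        = (M / P) ^ a * (M / Q) ^ b * R + (Real.exp x / P) ^ a * (Real.exp y / Q) ^ b * R := by
          rw [hMsplit, hEsplit]
      _ ≤ (a * (M/P) + b * (M/Q)) * R + (a * (Real.exp x/P) + b * (Real.exp y/Q)) * R := by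
          gcongr
      _ = R := by rw [← add_mul, hsum, one_mul]
  calc Real.log (M + Real.exp (a*x + b*y)) ≤ Real.log R := by
        apply Real.log_le_log (by positivity) hkey
    _ = a * Real.log P + b * Real.log Q := by
        rw [hRdef, Real.log_mul (by positivity) (by positivity),
          Real.log_rpow hP, Real.log_rpow hQ]

lemma core_slope (M : ℝ) (hM : 1 ≤ M) (q : ℝ)
    (hq : q = (Real.log (2*M+1) - Real.log (2*M)) / (Real.log (M+1) - Real.log M))
    (X : ℝ) (hX : 1 ≤ X) (hcase : X ≤ M ∨ M + 1 ≤ X) :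
    q * (Real.log X - Real.log M) ≤ Real.log (M + X) - Real.log (2*M) := by
  have hM0 : 0 < M := lt_of_lt_of_le one_pos hM
  have hX0 : 0 < X := lt_of_lt_of_le one_pos hX
  have hAB : Real.log M < Real.log (M+1) := Real.log_lt_log hM0 (by linarith)
  have hBA : 0 < Real.log (M+1) - Real.log M := by linarith
  have hq' : q * (Real.log (M+1) - Real.log M) = Real.log (2*M+1) - Real.log (2*M) := by
    rw [hq, div_mul_cancel₀ _ hBA.ne']
  have hconv := convex_log_add_exp M hM0
  rcases hcase with hXM | hXM
  · rcases eq_or_lt_of_le hXM with hXM' | hXM'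
    · rw [hXM', show M + M = 2*M by ring]
      simp
    · have hlog : Real.log X < Real.log M := Real.log_lt_log hX0 hXM'
      have hs := hconv.slope_mono_adjacent (Set.mem_univ (Real.log X))
        (Set.mem_univ (Real.log (M+1))) hlog hAB
      simp only [Real.exp_log hM0, Real.exp_log hX0,
        Real.exp_log (show (0:ℝ) < M+1 by linarith)] at hs
      rw [show M + M = 2*M by ring, show M + (M+1) = 2*M+1 by ring] at hs
      have h1 : Real.log (2*M) - Real.log (M + X) ≤ q * (Real.log M - Real.log X) := by
        rw [← hq] at hs
        have := (div_le_iff₀ (by linarith : 0 < Real.log M - Real.log X)).mp hs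
        linarith
      have hr : q * (Real.log X - Real.log M) = -(q * (Real.log M - Real.log X)) := by ring
      linarith
  · rcases eq_or_lt_of_le hXM with hXM' | hXM'
    · rw [← hXM', show M + (M+1) = 2*M+1 by ring]
      linarith [hq']
    · have hlog : Real.log (M+1) < Real.log X := Real.log_lt_log (by linarith) hXM'
      have hs := hconv.slope_mono_adjacent (Set.mem_univ (Real.log M))
        (Set.mem_univ (Real.log X)) hAB hlog
      simp only [Real.exp_log hM0, Real.exp_log hX0,
        Real.exp_log (show (0:ℝ) < M+1 by linarith)] at hs
      rw [show M + M = 2*M by ring, show M + (M+1) = 2*M+1 by ring] at hs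
      have h1 : q * (Real.log X - Real.log (M+1)) ≤ Real.log (M + X) - Real.log (2*M+1) := by
        rw [← hq] at hs
        have := (le_div_iff₀ (by linarith : 0 < Real.log X - Real.log (M+1))).mp hs
        linarith
      have hr : q * (Real.log X - Real.log M)
          = q * (Real.log X - Real.log (M+1)) + q * (Real.log (M+1) - Real.log M) := by ring
      linarith

/-- With `q = log((2m+1)/(2m))/log((m+1)/m)`, the function
`g j = j·(m/(j−m))^q` over integers `j ≥ m+1` has minimum value `2m`,
attained at `j = 2m` and at `j = 2m+1`. -/
theorem equal_mass_min_at_2m (m : ℕ) (hm : 1 ≤ m)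
    (q : ℝ) (hq : q = Real.log ((2 * m + 1) / (2 * m)) / Real.log ((m + 1) / m))
    (g : ℕ → ℝ) (hg : ∀ j : ℕ, g j = (j : ℝ) * ((m : ℝ) / ((j : ℝ) - m)) ^ q) :
    (∀ j : ℕ, m + 1 ≤ j → (2 * m : ℝ) ≤ g j) ∧
      g (2 * m) = 2 * m ∧ g (2 * m + 1) = 2 * m := by
  set M : ℝ := (m : ℝ) with hMdef
  have hM1 : (1:ℝ) ≤ M := by rw [hMdef]; exact_mod_cast hm
  have hM0 : (0:ℝ) < M := lt_of_lt_of_le one_pos hM1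
  have hBA : 0 < Real.log (M+1) - Real.log M := by
    have := Real.log_lt_log hM0 (show M < M + 1 by linarith); linarith
  have hq' : q = (Real.log (2*M+1) - Real.log (2*M)) / (Real.log (M+1) - Real.log M) := by
    rw [hq, Real.log_div (by positivity) (by positivity),
      Real.log_div (by positivity) (by positivity)]
  have hqL : q * (Real.log (M+1) - Real.log M) = Real.log (2*M+1) - Real.log (2*M) := by
    rw [hq', div_mul_cancel₀ _ hBA.ne']
  refine ⟨?_, ?_, ?_⟩
  · intro j hj
    rw [hg j]
    have hJ : M + 1 ≤ (j : ℝ) := by rw [hMdef]; exact_mod_cast hj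
    set X : ℝ := (j : ℝ) - M with hXdef
    have hX1 : (1:ℝ) ≤ X := by simp only [hXdef]; linarith
    have hX0 : (0:ℝ) < X := lt_of_lt_of_le one_pos hX1
    have hcase : X ≤ M ∨ M + 1 ≤ X := by
      rcases le_or_gt j (2*m) with h | h
      · left
        have : (j:ℝ) ≤ 2*M := by rw [hMdef]; exact_mod_cast h
        simp only [hXdef]; linarith
      · right
        have : (2*m+1 : ℕ) ≤ j := h
        have : (2*M+1 : ℝ) ≤ (j:ℝ) := by rw [hMdef]; exact_mod_cast this
        simp only [hXdef]; linarith
    have hcore := core_slope M hM1 q hq' X hX1 hcase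
    have hrpow : (M / X) ^ q = Real.exp (q * (Real.log M - Real.log X)) := by
      rw [Real.rpow_def_of_pos (by positivity), Real.log_div hM0.ne' hX0.ne']
      ring_nf
    have hjX : (j : ℝ) = M + X := by simp only [hXdef]; ring
    calc (2*M : ℝ) = Real.exp (Real.log (2*M)) := (Real.exp_log (by positivity)).symm
      _ ≤ Real.exp (Real.log (M+X) + q * (Real.log M - Real.log X)) := by
          apply Real.exp_le_exp.mpr
          have hr : q * (Real.log M - Real.log X) = -(q * (Real.log X - Real.log M)) := by ring
          linarith
      _ = (j : ℝ) * (M / X) ^ q := by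
          rw [Real.exp_add, Real.exp_log (by positivity), hrpow, hjX]
  · rw [hg]
    push_cast
    rw [show (2*M - M : ℝ) = M by ring, div_self hM0.ne', Real.one_rpow, mul_one]
  · rw [hg]
    push_cast
    rw [show (2*M + 1 - M : ℝ) = M + 1 by ring]
    have hrpow : (M / (M+1)) ^ q = 2*M / (2*M+1) := by
      rw [Real.rpow_def_of_pos (by positivity), Real.log_div hM0.ne' (by positivity)]
      rw [show (Real.log M - Real.log (M+1)) * q
          = -(q * (Real.log (M+1) - Real.log M)) by ring, hqL,
        show -(Real.log (2*M+1) - Real.log (2*M)) = Real.log (2*M) - Real.log (2*M+1) by ring,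
        Real.exp_sub, Real.exp_log (by positivity), Real.exp_log (by positivity)]
    rw [hrpow]
    field_simp
    rw [hMdef]
end

section
/- Fix an integer m ≥ 1, let q = log((2m+1)/(2m))/log((m+1)/m), and define h(j) = (j+1)·(m/(1+j−m))^q for integers j ≥ m. Then h(j) ≥ 2m for all integers j ≥ m. -/
open Real Set

/-- Chord bound for the concave function `x ^ q`: if `r ^ q = (r+1)/2` with `r > 1`
and `0 < q < 1`, then for `a` outside the open interval `(1, r)` we have
`a ^ q ≤ (a+1)/2`. -/
lemma chord_bound (q r : ℝ) (hq0 : 0 < q) (hq1 : q < 1) (hr : 1 < r)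
    (hrq : r ^ q = (r + 1) / 2) (a : ℝ) (ha : 0 ≤ a)
    (hcase : a ≤ 1 ∨ r ≤ a) : a ^ q ≤ (a + 1) / 2 := by
  have hconc := (Real.strictConcaveOn_rpow hq0 hq1).concaveOn
  rcases hcase with hc | hc
  · -- a ≤ 1 < r : 1 is a convex combination of a and r
    set t : ℝ := (r - 1) / (r - a) with ht
    have hra : 0 < r - a := by linarith
    have ht0 : 0 < t := div_pos (by linarith) hra
    have ht1 : t ≤ 1 := by
      rw [div_le_one hra]; linarith
    have hident : t * (a - r) = 1 - r := by
      rw [ht, div_mul_eq_mul_div, div_eq_iff hra.ne']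
      ring
    have hcomb : t * a + (1 - t) * r = 1 := by nlinarith [hident]
    have hcc := hconc.2 (mem_Ici.mpr ha) (mem_Ici.mpr (by linarith : (0:ℝ) ≤ r))
      ht0.le (by linarith : (0:ℝ) ≤ 1 - t) (by ring)
    simp only [smul_eq_mul] at hcc
    rw [hcomb, Real.one_rpow, hrq] at hcc
    -- hcc : t * a^q + (1-t) * ((r+1)/2) ≤ 1
    have key : t * (a ^ q) ≤ t * ((a + 1) / 2) := by nlinarith [hident]
    exact le_of_mul_le_mul_left key ht0
  · -- r ≤ a : handle equality, else r is a convex combination of 1 and a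
    rcases eq_or_lt_of_le hc with heq | hlt
    · rw [← heq, hrq]
    · set t : ℝ := (a - r) / (a - 1) with ht
      have ha1 : 0 < a - 1 := by linarith
      have ht0 : 0 ≤ t := le_of_lt (div_pos (by linarith) ha1)
      have ht1 : t < 1 := by rw [div_lt_one ha1]; linarith
      have hident : t * (a - 1) = a - r := by
        rw [ht, div_mul_eq_mul_div, div_eq_iff ha1.ne']
      have hcomb : t * 1 + (1 - t) * a = r := by nlinarith [hident]
      have hcc := hconc.2 (mem_Ici.mpr (by norm_num : (0:ℝ) ≤ 1)) (mem_Ici.mpr ha)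
        ht0 (by linarith : (0:ℝ) ≤ 1 - t) (by ring)
      simp only [smul_eq_mul] at hcc
      rw [hcomb, Real.one_rpow, hrq] at hcc
      -- hcc : t * 1 + (1-t) * a^q ≤ (r+1)/2
      have key : (1 - t) * (a ^ q) ≤ (1 - t) * ((a + 1) / 2) := by
        nlinarith [hident]
      exact le_of_mul_le_mul_left key (by linarith)

/-- With `q = log((2m+1)/(2m))/log((m+1)/m)`, the left-endpoint values
`h j = (j+1)·(m/(1+j−m))^q` satisfy `h j ≥ 2m` for all integers `j ≥ m`. -/
theorem left_endpoint_value_bound (m : ℕ) (hm : 1 ≤ m)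
    (q : ℝ) (hq : q = Real.log ((2 * m + 1) / (2 * m)) / Real.log ((m + 1) / m))
    (j : ℕ) (hj : m ≤ j) :
    (2 * m : ℝ) ≤ ((j : ℝ) + 1) * ((m : ℝ) / (1 + (j : ℝ) - m)) ^ q := by
  have hM : (1 : ℝ) ≤ m := by exact_mod_cast hm
  have hM0 : (0 : ℝ) < m := by linarith
  have hJ : (m : ℝ) ≤ j := by exact_mod_cast hj
  set r : ℝ := ((m : ℝ) + 1) / m with hrdef
  have hr1 : 1 < r := by
    rw [hrdef, lt_div_iff₀ hM0]; linarith
  set s : ℝ := (2 * (m : ℝ) + 1) / (2 * m) with hsdef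
  have hs1 : 1 < s := by
    rw [hsdef, lt_div_iff₀ (by linarith : (0:ℝ) < 2 * m)]; linarith
  have hsr : s < r := by
    rw [hsdef, hrdef, div_lt_div_iff₀ (by linarith : (0:ℝ) < 2 * m) hM0]
    nlinarith
  have hlogr : 0 < Real.log r := Real.log_pos hr1
  have hlogs : 0 < Real.log s := Real.log_pos hs1
  have hq0 : 0 < q := by
    rw [hq]; exact div_pos hlogs hlogr
  have hq1 : q < 1 := by
    rw [hq, div_lt_one hlogr]
    exact Real.log_lt_log (by linarith) hsr
  have hrq : r ^ q = (r + 1) / 2 := by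
    have h1 : r ^ q = Real.exp (Real.log r * q) :=
      Real.rpow_def_of_pos (by linarith) q
    have h2 : Real.log r * q = Real.log s := by
      rw [hq]; field_simp
    rw [h1, h2, Real.exp_log (by linarith : (0:ℝ) < s)]
    rw [hsdef, hrdef]
    field_simp
    ring
  set a : ℝ := ((j : ℝ) + 1 - m) / m with hadef
  have hjm1 : (0 : ℝ) < (j : ℝ) + 1 - m := by linarith
  have ha0 : 0 < a := div_pos hjm1 hM0
  have hcase : a ≤ 1 ∨ r ≤ a := by
    rcases lt_or_ge j (2 * m) with hlt | hge
    · left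
      rw [hadef, div_le_one hM0]
      have : (j : ℝ) + 1 ≤ 2 * m := by
        have : j + 1 ≤ 2 * m := hlt
        exact_mod_cast this
      linarith
    · right
      rw [hrdef, hadef, div_le_div_iff₀ hM0 hM0]
      have : (2 * m : ℝ) ≤ j := by exact_mod_cast hge
      nlinarith
  have hchord := chord_bound q r hq0 hq1 hr1 hrq a ha0.le hcase
  have haq : 0 < a ^ q := Real.rpow_pos_of_pos ha0 q
  have hinv : ((m : ℝ) / (1 + (j : ℝ) - m)) = a⁻¹ := by
    rw [hadef]
    rw [inv_div]
    ring_nf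
  have hma : (m : ℝ) * a = (j : ℝ) + 1 - m := by
    rw [hadef]; field_simp
  rw [hinv, Real.inv_rpow ha0.le, ← div_eq_mul_inv, le_div_iff₀ haq]
  nlinarith [mul_le_mul_of_nonneg_left hchord (by linarith : (0:ℝ) ≤ 2 * m), hma]
end

section
/- For c > 0, 1 ≤ p ≤ 2, and N ≥ 1, define f_{c,p}(t) = (t/(c−t))^{p/2} on [0,c). Then f_{1,p} (i.e., c = 1) is concave on [0, α] and convex on [α, 1), where α = 1/2 − p/4; equivalently, f_{1,p}''(t) ≤ 0 for t ∈ (0, α) and f_{1,p}''(t) ≥ 0 for t ∈ (α, 1). -/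
open Set Real

private lemma hasDerivAt_g (x : ℝ) (hx1 : x < 1) :
    HasDerivAt (fun t : ℝ => t / (1 - t)) (1 / (1 - x) ^ 2) x := by
  have hne : (1 : ℝ) - x ≠ 0 := by linarith
  have h := (hasDerivAt_id x).div ((hasDerivAt_const x (1:ℝ)).sub (hasDerivAt_id x)) hne
  refine h.congr_deriv ?_
  simp only [Pi.sub_apply, id_eq]
  field_simp
  ring

private lemma hasDerivAt_f (q x : ℝ) (hx0 : 0 < x) (hx1 : x < 1) :
    HasDerivAt (fun t : ℝ => (t / (1 - t)) ^ q)
      (1 / (1 - x) ^ 2 * q * (x / (1 - x)) ^ (q - 1)) x := by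
  have hu : (0:ℝ) < x / (1 - x) := div_pos hx0 (by linarith)
  exact (hasDerivAt_g x hx1).rpow_const (Or.inl (ne_of_gt hu))

private lemma hasDerivAt_F1 (q x : ℝ) (hx0 : 0 < x) (hx1 : x < 1) :
    HasDerivAt (fun t : ℝ => 1 / (1 - t) ^ 2 * q * (t / (1 - t)) ^ (q - 1))
      (q * (x / (1 - x)) ^ (q - 2) * (2 * x + q - 1) / (1 - x) ^ 4) x := by
  have hne : (1 : ℝ) - x ≠ 0 := by linarith
  have hu : (0:ℝ) < x / (1 - x) := div_pos hx0 (by linarith)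
  -- derivative of A t = 1/(1-t)^2
  have h1 : HasDerivAt (fun t : ℝ => 1 - t) (-1) x := by
    exact ((hasDerivAt_const x (1:ℝ)).sub (hasDerivAt_id x)).congr_deriv (by norm_num)
  have hA : HasDerivAt (fun t : ℝ => 1 / (1 - t) ^ 2) (2 / (1 - x) ^ 3) x := by
    have h := (hasDerivAt_const x (1:ℝ)).div (h1.pow 2) (pow_ne_zero 2 hne)
    refine h.congr_deriv ?_
    simp only [Pi.pow_apply]
    field_simp
    ring
  have hB : HasDerivAt (fun t : ℝ => (t / (1 - t)) ^ (q - 1))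
      (1 / (1 - x) ^ 2 * (q - 1) * (x / (1 - x)) ^ (q - 1 - 1)) x :=
    (hasDerivAt_g x hx1).rpow_const (Or.inl (ne_of_gt hu))
  have h := (hA.mul_const q).mul hB
  refine h.congr_deriv ?_
  have e1 : (x / (1 - x)) ^ (q - 1) = (x / (1 - x)) ^ (q - 2) * (x / (1 - x)) := by
    rw [show q - 1 = (q - 2) + 1 by ring, Real.rpow_add_one (ne_of_gt hu)]
  have e2 : q - 1 - 1 = q - 2 := by ring
  rw [e2, e1]
  field_simp
  ring

/-- For `1 ≤ p ≤ 2`, the function `f_{1,p}(t) = (t/(1−t))^(p/2)` is concave on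
`[0, α]` and convex on `[α, 1)`, where `α = 1/2 − p/4`. -/
theorem f_one_p_concave_convex (p : ℝ) (hp1 : 1 ≤ p) (hp2 : p ≤ 2) :
    ConcaveOn ℝ (Set.Icc (0 : ℝ) (1 / 2 - p / 4))
      (fun t : ℝ => (t / (1 - t)) ^ (p / 2)) ∧
    ConvexOn ℝ (Set.Ico (1 / 2 - p / 4) (1 : ℝ))
      (fun t : ℝ => (t / (1 - t)) ^ (p / 2)) := by
  set q : ℝ := p / 2 with hq
  set f : ℝ → ℝ := fun t : ℝ => (t / (1 - t)) ^ q with hf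
  have hq0 : (0:ℝ) < q := by rw [hq]; linarith
  have hα0 : (0:ℝ) ≤ 1 / 2 - p / 4 := by linarith
  have hα1 : (1:ℝ) / 2 - p / 4 ≤ 1 / 4 := by linarith
  -- second derivative of f equals F2 on Ioo 0 1
  have hderiv2 : ∀ x ∈ Ioo (0:ℝ) 1,
      HasDerivAt (deriv f) (q * (x / (1 - x)) ^ (q - 2) * (2 * x + q - 1) / (1 - x) ^ 4) x := by
    intro x hx
    have hev : deriv f =ᶠ[nhds x] (fun t : ℝ => 1 / (1 - t) ^ 2 * q * (t / (1 - t)) ^ (q - 1)) := by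
      filter_upwards [isOpen_Ioo.mem_nhds hx] with y hy
      exact (hasDerivAt_f q y hy.1 hy.2).deriv
    exact (hasDerivAt_F1 q x hx.1 hx.2).congr_of_eventuallyEq hev
  have hdiff : ∀ x ∈ Ioo (0:ℝ) 1, DifferentiableAt ℝ f x := fun x hx =>
    (hasDerivAt_f q x hx.1 hx.2).differentiableAt
  have hF2sign : ∀ x ∈ Ioo (0:ℝ) 1,
      (0 ≤ 2 * x + q - 1 → 0 ≤ q * (x / (1 - x)) ^ (q - 2) * (2 * x + q - 1) / (1 - x) ^ 4) ∧
      (2 * x + q - 1 ≤ 0 → q * (x / (1 - x)) ^ (q - 2) * (2 * x + q - 1) / (1 - x) ^ 4 ≤ 0) := by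
    intro x hx
    have hu : (0:ℝ) < x / (1 - x) := div_pos hx.1 (by linarith [hx.2])
    have hr : (0:ℝ) < (x / (1 - x)) ^ (q - 2) := Real.rpow_pos_of_pos hu _
    have hd : (0:ℝ) < (1 - x) ^ (4:ℕ) := pow_pos (by linarith [hx.2]) 4
    constructor
    · intro h
      exact div_nonneg (mul_nonneg (mul_nonneg hq0.le hr.le) h) hd.le
    · intro h
      exact div_nonpos_of_nonpos_of_nonneg
        (mul_nonpos_of_nonneg_of_nonpos (mul_nonneg hq0.le hr.le) h) hd.le
  -- continuity of f on [0,1)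
  have hcont : ContinuousOn f (Ico (0:ℝ) 1) := by
    apply ContinuousOn.rpow_const
    · exact continuousOn_id.div (continuousOn_const.sub continuousOn_id)
        (fun x hx => by have := hx.2; intro h; linarith)
    · intro x _; exact Or.inr hq0.le
  constructor
  · -- concave part on Icc 0 α
    apply concaveOn_of_deriv2_nonpos (convex_Icc _ _)
    · exact hcont.mono (fun x hx => ⟨hx.1, lt_of_le_of_lt hx.2 (by linarith)⟩)
    · rw [interior_Icc]
      intro x hx
      have hx' : x ∈ Ioo (0:ℝ) 1 := ⟨hx.1, by linarith [hx.2]⟩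
      exact (hdiff x hx').differentiableWithinAt
    · rw [interior_Icc]
      intro x hx
      have hx' : x ∈ Ioo (0:ℝ) 1 := ⟨hx.1, by linarith [hx.2]⟩
      exact (hderiv2 x hx').differentiableAt.differentiableWithinAt
    · rw [interior_Icc]
      intro x hx
      have hx' : x ∈ Ioo (0:ℝ) 1 := ⟨hx.1, by linarith [hx.2]⟩
      have : deriv^[2] f x = q * (x / (1 - x)) ^ (q - 2) * (2 * x + q - 1) / (1 - x) ^ 4 := by
        simp only [Function.iterate_succ, Function.iterate_zero, Function.comp_apply, id_eq]
        exact (hderiv2 x hx').deriv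
      rw [this]
      exact (hF2sign x hx').2 (by rw [hq] at *; linarith [hx.2])
  · -- convex part on Ico α 1
    apply convexOn_of_deriv2_nonneg (convex_Ico _ _)
    · exact hcont.mono (fun x hx => ⟨le_trans hα0 hx.1, hx.2⟩)
    · rw [interior_Ico]
      intro x hx
      have hx' : x ∈ Ioo (0:ℝ) 1 := ⟨lt_of_le_of_lt hα0 hx.1, hx.2⟩
      exact (hdiff x hx').differentiableWithinAt
    · rw [interior_Ico]
      intro x hx
      have hx' : x ∈ Ioo (0:ℝ) 1 := ⟨lt_of_le_of_lt hα0 hx.1, hx.2⟩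
      exact (hderiv2 x hx').differentiableAt.differentiableWithinAt
    · rw [interior_Ico]
      intro x hx
      have hx' : x ∈ Ioo (0:ℝ) 1 := ⟨lt_of_le_of_lt hα0 hx.1, hx.2⟩
      have : deriv^[2] f x = q * (x / (1 - x)) ^ (q - 2) * (2 * x + q - 1) / (1 - x) ^ 4 := by
        simp only [Function.iterate_succ, Function.iterate_zero, Function.comp_apply, id_eq]
        exact (hderiv2 x hx').deriv
      rw [this]
      exact (hF2sign x hx').1 (by rw [hq] at *; linarith [hx.1])
end

section
/- For any real N×N symmetric positive semidefinite matrix A of rank d < N with all diagonal entries equal to 1, and any 1 ≤ p ≤ 2, the p-frame energy satisfies E_p(A) = ∑_{i≠j}|A_{i,j}|^p ≥ M(1/(N−d), p, N), where M(c,p,N) is the minimum of ∑_{i=1}^N (t_i/(c−t_i))^{p/2} over t_i ∈ [0,c) with ∑ t_i = 1. -/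
open Finset Real Matrix

/-- Hölder-type inequality: `∑ a b ≤ (∑ aᵖ)^(1/p) * S` when `∑ b² ≤ S²`, `1 ≤ p ≤ 2`. -/
lemma holder_step {ι : Type*} (s : Finset ι) (a b : ι → ℝ)
    (ha : ∀ j ∈ s, 0 ≤ a j) (hb : ∀ j ∈ s, 0 ≤ b j)
    {p S : ℝ} (hp1 : 1 ≤ p) (hp2 : p ≤ 2) (hS : 0 ≤ S)
    (hb2 : ∑ j ∈ s, (b j) ^ (2:ℕ) ≤ S ^ (2:ℕ)) :
    ∑ j ∈ s, a j * b j ≤ (∑ j ∈ s, a j ^ p) ^ (1/p) * S := by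
  have hbS : ∀ j ∈ s, b j ≤ S := by
    intro j hj
    have h1 : (b j)^(2:ℕ) ≤ ∑ k ∈ s, (b k)^(2:ℕ) :=
      Finset.single_le_sum (f := fun k => b k ^ (2:ℕ)) (fun k _ => sq_nonneg _) hj
    nlinarith [hb j hj]
  rcases eq_or_lt_of_le hp1 with hp | hp
  · -- p = 1
    subst hp
    simp only [one_div, inv_one, Real.rpow_one]
    calc ∑ j ∈ s, a j * b j ≤ ∑ j ∈ s, a j * S :=
          Finset.sum_le_sum fun j hj => mul_le_mul_of_nonneg_left (hbS j hj) (ha j hj)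
      _ = (∑ j ∈ s, a j) * S := by rw [← Finset.sum_mul]
  · set q := p.conjExponent with hqdef
    have hpq : p.HolderConjugate q := Real.HolderConjugate.conjExponent hp
    have hq2 : (2:ℝ) ≤ q := by
      rw [hqdef, Real.conjExponent, le_div_iff₀ (by linarith)]
      linarith
    have hq0 : 0 < q := by linarith
    have key := Real.inner_le_Lp_mul_Lq_of_nonneg s hpq ha hb
    -- bound (∑ b^q)^(1/q) ≤ S
    have hbq : ∑ j ∈ s, b j ^ q ≤ S ^ q := by
      have h1 : ∀ j ∈ s, b j ^ q ≤ b j ^ (2:ℕ) * S ^ (q - 2) := by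
        intro j hj
        rcases eq_or_lt_of_le (hb j hj) with h0 | h0
        · rw [← h0, Real.zero_rpow (by linarith)]
          positivity
        · have : b j ^ q = b j ^ (2:ℝ) * b j ^ (q-2) := by
            rw [← Real.rpow_add h0]; ring_nf
          rw [this, Real.rpow_two]
          exact mul_le_mul_of_nonneg_left
            (Real.rpow_le_rpow (hb j hj) (hbS j hj) (by linarith)) (sq_nonneg _)
      calc ∑ j ∈ s, b j ^ q ≤ ∑ j ∈ s, b j ^ (2:ℕ) * S ^ (q-2) :=
            Finset.sum_le_sum h1
        _ = (∑ j ∈ s, b j ^ (2:ℕ)) * S ^ (q-2) := by rw [← Finset.sum_mul]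
        _ ≤ S ^ (2:ℕ) * S ^ (q-2) := by
            have : (0:ℝ) ≤ S ^ (q-2) := Real.rpow_nonneg hS _
            exact mul_le_mul_of_nonneg_right hb2 this
        _ = S ^ q := by
            rw [← Real.rpow_natCast S 2, ← Real.rpow_add' hS (by norm_num; linarith)]
            norm_num
    have hbq' : (∑ j ∈ s, b j ^ q) ^ (1/q) ≤ S := by
      calc (∑ j ∈ s, b j ^ q) ^ (1/q) ≤ (S ^ q) ^ (1/q) :=
            Real.rpow_le_rpow (Finset.sum_nonneg fun j hj => Real.rpow_nonneg (hb j hj) _)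
              hbq (by positivity)
        _ = S := by
            rw [← Real.rpow_mul hS, mul_one_div, div_self (ne_of_gt hq0), Real.rpow_one]
    calc ∑ j ∈ s, a j * b j ≤ (∑ j ∈ s, a j ^ p) ^ (1/p) * (∑ j ∈ s, b j ^ q) ^ (1/q) := key
      _ ≤ (∑ j ∈ s, a j ^ p) ^ (1/p) * S := by
          gcongr
          exact Real.rpow_nonneg (Finset.sum_nonneg fun j hj => Real.rpow_nonneg (ha j hj) _) _

/-- Scalar step: if `x ≤ ∑ a b` with `∑ b² ≤ x(1-x)`, `0 ≤ x < 1`, then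
`(x/(1-x))^(p/2) ≤ ∑ aᵖ`. -/
lemma scalar_step {ι : Type*} (s : Finset ι) (a b : ι → ℝ)
    (ha : ∀ j ∈ s, 0 ≤ a j) (hb : ∀ j ∈ s, 0 ≤ b j)
    {p x : ℝ} (hp1 : 1 ≤ p) (hp2 : p ≤ 2) (hx0 : 0 ≤ x) (hx1 : x < 1)
    (hxab : x ≤ ∑ j ∈ s, a j * b j)
    (hb2 : ∑ j ∈ s, (b j) ^ (2:ℕ) ≤ x * (1 - x)) :
    (x / (1 - x)) ^ (p/2) ≤ ∑ j ∈ s, a j ^ p := by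
  have hsum0 : (0:ℝ) ≤ ∑ j ∈ s, a j ^ p :=
    Finset.sum_nonneg fun j hj => Real.rpow_nonneg (ha j hj) _
  rcases eq_or_lt_of_le hx0 with h0 | h0
  · rw [← h0]
    rw [zero_div, Real.zero_rpow (by positivity)]
    exact hsum0
  · set S := Real.sqrt (x * (1 - x)) with hSdef
    have h1x : (0:ℝ) < 1 - x := by linarith
    have hS : 0 ≤ S := Real.sqrt_nonneg _
    have hSpos : 0 < S := Real.sqrt_pos.mpr (by positivity)
    have hS2 : S ^ (2:ℕ) = x * (1 - x) := Real.sq_sqrt (by positivity)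
    have hkey : x ≤ (∑ j ∈ s, a j ^ p) ^ (1/p) * S :=
      le_trans hxab (holder_step s a b ha hb hp1 hp2 hS (by rw [hS2]; exact hb2))
    have hdivS : x / S ≤ (∑ j ∈ s, a j ^ p) ^ (1/p) :=
      (div_le_iff₀ hSpos).mpr hkey
    have hxS : x / S = Real.sqrt (x / (1 - x)) := by
      rw [hSdef, Real.sqrt_mul hx0, Real.sqrt_div hx0]
      rw [eq_div_iff (by positivity)]
      field_simp
      rw [Real.sq_sqrt hx0]
    have hfinal : (x / S) ^ p ≤ ∑ j ∈ s, a j ^ p := by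
      calc (x / S) ^ p ≤ ((∑ j ∈ s, a j ^ p) ^ (1/p)) ^ p :=
            Real.rpow_le_rpow (by positivity) hdivS (by linarith)
        _ = ∑ j ∈ s, a j ^ p := by
            rw [← Real.rpow_mul hsum0, one_div, inv_mul_cancel₀ (by linarith), Real.rpow_one]
    calc (x / (1 - x)) ^ (p/2) = ((x / (1-x)) ^ ((1:ℝ)/2)) ^ p := by
          rw [← Real.rpow_mul (by positivity)]; ring_nf
      _ = (x / S) ^ p := by rw [hxS, Real.sqrt_eq_rpow]
      _ ≤ ∑ j ∈ s, a j ^ p := hfinal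

/-- Glazyrin's lemma: for an `N×N` real positive semidefinite matrix `A` of rank
`d < N` with unit diagonal and `1 ≤ p ≤ 2`, the `p`-frame energy is bounded
below by `M(1/(N−d), p, N)`, the infimum of `∑ (tᵢ/(c−tᵢ))^(p/2)` over
`tᵢ ∈ [0,c)` with `∑ tᵢ = 1`, where `c = 1/(N−d)`. -/
theorem energy_ge_relaxed_min (N d : ℕ) (hd : d < N) (p : ℝ) (hp1 : 1 ≤ p) (hp2 : p ≤ 2)
    (A : Matrix (Fin N) (Fin N) ℝ) (hA : A.PosSemidef) (hrank : A.rank = d)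
    (hdiag : ∀ i, A i i = 1) :
    sInf {s : ℝ | ∃ t : Fin N → ℝ,
        (∀ i, t i ∈ Set.Ico (0 : ℝ) (1 / ((N : ℝ) - d))) ∧ (∑ i, t i) = 1 ∧
        s = ∑ i, (t i / (1 / ((N : ℝ) - d) - t i)) ^ (p / 2)} ≤
      ∑ i, ∑ j, if i ≠ j then |A i j| ^ p else 0 := by
  classical
  have hH : A.IsHermitian := hA.1
  set U : Matrix (Fin N) (Fin N) ℝ := (hH.eigenvectorUnitary : Matrix (Fin N) (Fin N) ℝ)
    with hUdef
  set D : Matrix (Fin N) (Fin N) ℝ :=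
    Matrix.diagonal (fun i => if hH.eigenvalues i = 0 then (1:ℝ) else 0) with hDdef
  set P : Matrix (Fin N) (Fin N) ℝ := U * D * star U with hPdef
  have hUU' : star U * U = 1 :=
    Matrix.mem_unitaryGroup_iff'.mp (Matrix.IsHermitian.eigenvectorUnitary hH).2
  have hconj : ∀ M M' : Matrix (Fin N) (Fin N) ℝ,
      (U * M * star U) * (U * M' * star U) = U * (M * M') * star U := by
    intro M M'
    simp only [Matrix.mul_assoc]
    rw [← Matrix.mul_assoc (star U) U, hUU', Matrix.one_mul]
  have hDD : D * D = D := by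
    rw [hDdef, Matrix.diagonal_mul_diagonal]
    have : (fun i => (if hH.eigenvalues i = 0 then (1:ℝ) else 0) *
        (if hH.eigenvalues i = 0 then (1:ℝ) else 0)) =
        (fun i => if hH.eigenvalues i = 0 then (1:ℝ) else 0) := by
      funext i
      by_cases h : hH.eigenvalues i = 0 <;> simp [h]
    rw [this]
  have hP2 : P * P = P := by rw [hPdef, hconj, hDD]
  have hAP : A * P = 0 := by
    have hspec := hH.spectral_theorem
    simp only [Unitary.conjStarAlgAut_apply, Unitary.coe_star] at hspec
    rw [← hUdef] at hspec
    have hzero : Matrix.diagonal (RCLike.ofReal ∘ hH.eigenvalues) * D = 0 := by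
      rw [hDdef, Matrix.diagonal_mul_diagonal]
      have : (fun i => (RCLike.ofReal ∘ hH.eigenvalues) i *
          (if hH.eigenvalues i = 0 then (1:ℝ) else 0)) = fun _ => (0:ℝ) := by
        funext i
        by_cases h : hH.eigenvalues i = 0 <;>
          simp [h, Function.comp, RCLike.ofReal_real_eq_id]
      rw [this, Matrix.diagonal_zero]
    rw [hspec, hPdef, hconj, hzero, Matrix.mul_zero, Matrix.zero_mul]
  have hPH : Pᴴ = P := by
    rw [hPdef, Matrix.star_eq_conjTranspose, Matrix.conjTranspose_mul,
      Matrix.conjTranspose_mul, Matrix.conjTranspose_conjTranspose, hDdef,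
      Matrix.diagonal_conjTranspose]
    simp [Matrix.mul_assoc, star_trivial]
  have hPs : ∀ i j, P i j = P j i := by
    intro i j
    have h := congrArg (fun M => M i j) hPH
    simpa [Matrix.conjTranspose_apply] using h.symm
  have hcol : ∀ i, ∑ j, (P j i)^(2:ℕ) = P i i := by
    intro i
    have h := congrArg (fun M => M i i) hP2
    simp only [Matrix.mul_apply] at h
    calc ∑ j, (P j i)^(2:ℕ) = ∑ j, P i j * P j i := by
          apply Finset.sum_congr rfl
          intro j _
          rw [hPs i j, sq]
      _ = P i i := h
  set Q : Matrix (Fin N) (Fin N) ℝ := 1 - P with hQdef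
  have hQ2 : Q * Q = Q := by
    have hexp : (1 - P) * (1 - P) = 1 - P - P + P * P := by noncomm_ring
    rw [hQdef, hexp, hP2]
    abel
  have hQs : ∀ i j, Q i j = Q j i := by
    intro i j
    by_cases h : i = j
    · subst h; rfl
    · simp [hQdef, Matrix.sub_apply, Matrix.one_apply_ne, h, Ne.symm h, hPs i j]
  have hQcol : ∀ i, ∑ j, (Q j i)^(2:ℕ) = Q i i := by
    intro i
    have h := congrArg (fun M => M i i) hQ2
    simp only [Matrix.mul_apply] at h
    calc ∑ j, (Q j i)^(2:ℕ) = ∑ j, Q i j * Q j i := by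
          apply Finset.sum_congr rfl
          intro j _
          rw [hQs i j, sq]
      _ = Q i i := h
  have hd0 : ∀ i, 0 ≤ P i i := by
    intro i
    rw [← hcol i]
    exact Finset.sum_nonneg fun j _ => sq_nonneg _
  have hQii : ∀ i, Q i i = 1 - P i i := by
    intro i
    simp [hQdef, Matrix.sub_apply, Matrix.one_apply_eq]
  have hd1 : ∀ i, P i i ≤ 1 := by
    intro i
    have h0 : 0 ≤ Q i i := by
      rw [← hQcol i]
      exact Finset.sum_nonneg fun j _ => sq_nonneg _
    rw [hQii i] at h0
    linarith
  have hAPii : ∀ i, A i i * P i i + ∑ j ∈ Finset.univ.erase i, A i j * P j i = 0 := by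
    intro i
    have h := congrArg (fun M => M i i) hAP
    simp only [Matrix.mul_apply, Matrix.zero_apply] at h
    rw [← h]
    exact Finset.add_sum_erase _ (fun j => A i j * P j i) (Finset.mem_univ i)
  have hlt1 : ∀ i, P i i < 1 := by
    intro i
    rcases lt_or_eq_of_le (hd1 i) with h | h
    · exact h
    exfalso
    have hsplit := hcol i
    rw [← Finset.add_sum_erase _ (fun j => (P j i)^(2:ℕ)) (Finset.mem_univ i)] at hsplit
    rw [h] at hsplit
    have hsq : ∑ j ∈ Finset.univ.erase i, (P j i)^(2:ℕ) = 0 := by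
      rw [one_pow] at hsplit
      linarith
    have hz : ∀ j ∈ Finset.univ.erase i, P j i = 0 := by
      intro j hj
      have h0 := (Finset.sum_eq_zero_iff_of_nonneg
        (fun k _ => sq_nonneg (P k i))).mp hsq j hj
      exact pow_eq_zero_iff (two_ne_zero) |>.mp h0
    have h0 := hAPii i
    rw [hdiag i, h, Finset.sum_eq_zero (fun j hj => by rw [hz j hj, mul_zero])] at h0
    norm_num at h0
  have hPle : ∀ i, P i i ≤ ∑ j ∈ Finset.univ.erase i, |A i j| * |P j i| := by
    intro i
    have h0 := hAPii i
    rw [hdiag i, one_mul] at h0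
    have heq : P i i = ∑ j ∈ Finset.univ.erase i, -(A i j * P j i) := by
      rw [Finset.sum_neg_distrib]
      linarith
    rw [heq]
    apply Finset.sum_le_sum
    intro j _
    rw [← abs_mul]
    exact neg_le_abs _
  have htrP : ∑ i, P i i = (N:ℝ) - d := by
    have h2 : Matrix.trace P = Matrix.trace D := by
      rw [hPdef, Matrix.trace_mul_comm, ← Matrix.mul_assoc, hUU', Matrix.one_mul]
    have h4 : (Finset.univ.filter (fun i => ¬ hH.eigenvalues i = 0)).card = d := by
      have h := hH.rank_eq_card_non_zero_eigs
      rw [hrank, Fintype.card_subtype] at h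
      exact h.symm
    have h5 : (Finset.univ.filter (fun i => hH.eigenvalues i = 0)).card + d = N := by
      rw [← h4]
      rw [Finset.card_filter_add_card_filter_not]
      simp
    have h3 : Matrix.trace D =
        ((Finset.univ.filter (fun i => hH.eigenvalues i = 0)).card : ℝ) := by
      simp [hDdef, Matrix.trace, Matrix.diag, Finset.sum_boole]
    have h1 : ∑ i, P i i = Matrix.trace P := by
      simp [Matrix.trace, Matrix.diag]
    rw [h1, h2, h3]
    have := h5
    push_cast [← this]
    ring
  have hNd : (0:ℝ) < (N:ℝ) - d := by
    have : (d:ℝ) < N := by exact_mod_cast hd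
    linarith
  have hmem : (∑ i, (P i i / (1 - P i i)) ^ (p/2)) ∈ {s : ℝ | ∃ t : Fin N → ℝ,
      (∀ i, t i ∈ Set.Ico (0 : ℝ) (1 / ((N : ℝ) - d))) ∧ (∑ i, t i) = 1 ∧
      s = ∑ i, (t i / (1 / ((N : ℝ) - d) - t i)) ^ (p / 2)} := by
    refine ⟨fun i => P i i / ((N:ℝ) - d), fun i => ⟨div_nonneg (hd0 i) hNd.le, ?_⟩, ?_, ?_⟩
    · rw [div_lt_div_iff₀ hNd hNd]
      nlinarith [hlt1 i]
    · rw [← Finset.sum_div, htrP, div_self hNd.ne']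
    · apply Finset.sum_congr rfl
      intro i _
      congr 1
      have h1x : (0:ℝ) < 1 - P i i := by linarith [hlt1 i]
      field_simp
  have hbdd : BddBelow {s : ℝ | ∃ t : Fin N → ℝ,
      (∀ i, t i ∈ Set.Ico (0 : ℝ) (1 / ((N : ℝ) - d))) ∧ (∑ i, t i) = 1 ∧
      s = ∑ i, (t i / (1 / ((N : ℝ) - d) - t i)) ^ (p / 2)} := by
    refine ⟨0, ?_⟩
    rintro y ⟨t, ht, -, rfl⟩
    exact Finset.sum_nonneg fun i _ => Real.rpow_nonneg
      (div_nonneg (ht i).1 (sub_nonneg.mpr (le_of_lt (ht i).2))) _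
  refine le_trans (csInf_le hbdd hmem) ?_
  apply Finset.sum_le_sum
  intro i _
  have hrw : ∑ j, (if i ≠ j then |A i j| ^ p else 0) =
      ∑ j ∈ Finset.univ.erase i, |A i j| ^ p := by
    rw [← Finset.filter_ne, Finset.sum_filter]
  rw [hrw]
  have hb2 : ∑ j ∈ Finset.univ.erase i, |P j i| ^ (2:ℕ) ≤ P i i * (1 - P i i) := by
    have hsp : ∑ j ∈ Finset.univ.erase i, (P j i)^(2:ℕ) = P i i - (P i i)^(2:ℕ) := by
      have h := hcol i
      rw [← Finset.add_sum_erase _ (fun j => (P j i)^(2:ℕ)) (Finset.mem_univ i)] at h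
      linarith
    calc ∑ j ∈ Finset.univ.erase i, |P j i| ^ (2:ℕ)
        = ∑ j ∈ Finset.univ.erase i, (P j i)^(2:ℕ) := by
          apply Finset.sum_congr rfl
          intro j _
          rw [sq_abs]
      _ = P i i - (P i i)^(2:ℕ) := hsp
      _ ≤ P i i * (1 - P i i) := le_of_eq (by ring)
  exact scalar_step (Finset.univ.erase i) (fun j => |A i j|) (fun j => |P j i|)
    (fun j _ => abs_nonneg _) (fun j _ => abs_nonneg _) hp1 hp2 (hd0 i) (hlt1 i)
    (hPle i) hb2
end

section
/- For m ≥ 1 and p_{0,m} = 2·log((2m+1)/(2m))/log((m+1)/m), if x ≥ 1/2 − p_{0,m}/4 and x < 1/j for a positive integer j, then j ≤ 4m. -/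
lemma excess_key (m : ℕ) (hm : 1 ≤ m) :
    (4 * (m : ℝ) + 1) * Real.log ((2 * m + 1) / (2 * m)) ≤
      (4 * (m : ℝ) - 1) * Real.log ((m + 1) / m) := by
  rcases eq_or_lt_of_le hm with h1 | h2
  · -- m = 1 : 5 log(3/2) ≤ 3 log 2, i.e. (3/2)^5 ≤ 2^3
    have hm1 : m = 1 := h1.symm
    subst hm1
    push_cast
    norm_num
    have h5 : (5 : ℝ) * Real.log (3 / 2) = Real.log ((3 / 2 : ℝ) ^ (5 : ℕ)) := by
      rw [Real.log_pow]; push_cast; ring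
    have h3 : (3 : ℝ) * Real.log 2 = Real.log ((2 : ℝ) ^ (3 : ℕ)) := by
      rw [Real.log_pow]; push_cast; ring
    rw [h5, h3]
    apply Real.log_le_log (by positivity)
    norm_num
  · -- m ≥ 2
    have hM : (2 : ℝ) ≤ (m : ℝ) := by exact_mod_cast h2
    set M : ℝ := (m : ℝ) with hMdef
    have hMpos : (0 : ℝ) < M := by linarith
    have hup : Real.log ((2 * M + 1) / (2 * M)) ≤ 1 / (2 * M) := by
      have := Real.log_le_sub_one_of_pos (x := (2 * M + 1) / (2 * M)) (by positivity)
      have he : (2 * M + 1) / (2 * M) - 1 = 1 / (2 * M) := by field_simp; ring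
      linarith [he ▸ this]
    have hlo : 1 / (M + 1) ≤ Real.log ((M + 1) / M) := by
      have hpos : (0 : ℝ) < M / (M + 1) := by positivity
      have := Real.log_le_sub_one_of_pos hpos
      have hinv : Real.log (M / (M + 1)) = - Real.log ((M + 1) / M) := by
        rw [← Real.log_inv]; congr 1; field_simp
      rw [hinv] at this
      have he : M / (M + 1) - 1 = -(1 / (M + 1)) := by field_simp; ring
      linarith [he ▸ this]
    have h1 : (4 * M + 1) * Real.log ((2 * M + 1) / (2 * M)) ≤ (4 * M + 1) / (2 * M) := by
      have := mul_le_mul_of_nonneg_left hup (by linarith : (0:ℝ) ≤ 4 * M + 1)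
      calc (4 * M + 1) * Real.log ((2 * M + 1) / (2 * M)) ≤ (4 * M + 1) * (1 / (2 * M)) := this
        _ = (4 * M + 1) / (2 * M) := by ring
    have h2' : (4 * M - 1) / (M + 1) ≤ (4 * M - 1) * Real.log ((M + 1) / M) := by
      have := mul_le_mul_of_nonneg_left hlo (by linarith : (0:ℝ) ≤ 4 * M - 1)
      calc (4 * M - 1) / (M + 1) = (4 * M - 1) * (1 / (M + 1)) := by ring
        _ ≤ (4 * M - 1) * Real.log ((M + 1) / M) := this
    have hmid : (4 * M + 1) / (2 * M) ≤ (4 * M - 1) / (M + 1) := by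
      rw [div_le_div_iff₀ (by linarith) (by linarith)]
      nlinarith
    linarith

/-- If `x ≥ 1/2 − p_{0,m}/4` (with `p_{0,m} = 2·log((2m+1)/(2m))/log((m+1)/m)`)
and `x < 1/j` for a positive integer `j`, then `j ≤ 4m`. -/
theorem excess_mass_count_bound (m : ℕ) (hm : 1 ≤ m) (j : ℕ) (hj : 1 ≤ j) (x : ℝ)
    (hx1 : 1 / 2 - (2 * Real.log ((2 * m + 1) / (2 * m)) /
      Real.log ((m + 1) / m)) / 4 ≤ x)
    (hx2 : x < 1 / (j : ℝ)) :
    j ≤ 4 * m := by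
  by_contra hcon
  push_neg at hcon
  have hjm : 4 * m + 1 ≤ j := hcon
  have hMpos : (0 : ℝ) < (m : ℝ) := by exact_mod_cast hm
  have hL1 : 0 < Real.log (((m : ℝ) + 1) / m) := by
    apply Real.log_pos
    rw [lt_div_iff₀ hMpos]; linarith
  set L2 := Real.log ((2 * (m : ℝ) + 1) / (2 * m)) with hL2def
  set L1 := Real.log (((m : ℝ) + 1) / m) with hL1def
  have hkey := excess_key m hm
  -- L2 / L1 ≤ (4m-1)/(4m+1)
  have hdiv : L2 / L1 ≤ (4 * (m : ℝ) - 1) / (4 * m + 1) := by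
    rw [div_le_div_iff₀ hL1 (by linarith)]
    linarith
  -- so 1/2 - (2 L2 / L1)/4 ≥ 1/(4m+1)
  have hge : (1 : ℝ) / (4 * m + 1) ≤ 1 / 2 - (2 * L2 / L1) / 4 := by
    have h2 : 2 * L2 / L1 = 2 * (L2 / L1) := by ring
    rw [h2]
    have h3 : 2 * (L2 / L1) ≤ 2 * ((4 * (m : ℝ) - 1) / (4 * m + 1)) := by linarith
    have h4 : (1 : ℝ) / 2 - (2 * ((4 * (m : ℝ) - 1) / (4 * m + 1))) / 4
        = 1 / (4 * m + 1) := by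
      field_simp; ring
    linarith
  have hxge : (1 : ℝ) / (4 * m + 1) ≤ x := le_trans hge hx1
  have hjR : (4 * (m : ℝ) + 1) ≤ (j : ℝ) := by exact_mod_cast hjm
  have : (1 : ℝ) / (j : ℝ) ≤ 1 / (4 * m + 1) :=
    one_div_le_one_div_of_le (by linarith) hjR
  linarith
end
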